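/- Let A be a ring possessing the right triple factorization property (TF)_right and let m ≥ 1. Then the polynomial algebra A[x_1, …, x_m] in m (commuting) indeterminates over A, realized as the monoid algebra of A over the free commutative monoid on m generators (Mathlib's AddMonoidAlgebra A (Fin m →₀ ℕ)), also possesses the right triple factorization property (TF)_right. -/

import Mathlib

/-- A ring `A` has the right triple factorization property `(TF)_right` if for every
finite collection `a 1, …, a k` of elements of `A` there exist elements
`b 1, …, b k, c, d` of `A` such that `a i = b i * c * d` for all `i` and the left
annihilators in `A` of `c` and of `c * d` coincide. -/
def TFright (A : Type*) [Ring A] : Prop :=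
  ∀ (k : ℕ) (a : Fin k → A), ∃ (b : Fin k → A) (c d : A),
    (∀ i, a i = b i * c * d) ∧ ∀ y : A, y * (c * d) = 0 ↔ y * c = 0

theorem TFright.family {A : Type*} [Ring A] (hA : TFright A) {ι : Type*} [Fintype ι]
    (a : ι → A) : ∃ (b : ι → A) (c d : A),
    (∀ i, a i = b i * c * d) ∧ ∀ y : A, y * (c * d) = 0 ↔ y * c = 0 := by
  obtain ⟨b, c, d, h1, h2⟩ := hA (Fintype.card ι) (a ∘ (Fintype.equivFin ι).symm)
  exact ⟨b ∘ (Fintype.equivFin ι), c, d,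
    fun i => by simpa using h1 ((Fintype.equivFin ι) i), h2⟩

/-- If a ring `A` has `(TF)_right`, then so does the polynomial algebra
`A[x₁, …, xₘ]`, realized as the monoid algebra of `A` over the free commutative
monoid `Fin m →₀ ℕ`. -/
theorem polynomialAlgebra_TFright {A : Type*} [Ring A] (hA : TFright A)
    (m : ℕ) (hm : 1 ≤ m) :
    TFright (AddMonoidAlgebra A (Fin m →₀ ℕ)) := by
  classical
  intro k a
  obtain ⟨b, c, d, h1, h2⟩ := hA.family
    (ι := (i : Fin k) × {μ // μ ∈ (a i).coeff.support}) (fun p => (a p.1).coeff p.2.1)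
  refine ⟨fun i => ∑ μ ∈ (a i).coeff.support.attach,
      AddMonoidAlgebra.single μ.1 (b ⟨i, μ⟩),
    AddMonoidAlgebra.single 0 c, AddMonoidAlgebra.single 0 d, ?_, ?_⟩
  · intro i
    rw [Finset.sum_mul, Finset.sum_mul]
    have : ∀ μ ∈ (a i).coeff.support.attach,
        AddMonoidAlgebra.single μ.1 (b ⟨i, μ⟩) * AddMonoidAlgebra.single 0 c *
          AddMonoidAlgebra.single 0 d
        = AddMonoidAlgebra.single (M := Fin m →₀ ℕ) μ.1 ((a i).coeff μ.1) := by
      intro μ _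
      rw [AddMonoidAlgebra.single_mul_single, AddMonoidAlgebra.single_mul_single,
        add_zero, add_zero, ← h1 ⟨i, μ⟩]
    rw [Finset.sum_congr rfl this, Finset.sum_attach _
      (fun μ => AddMonoidAlgebra.single (M := Fin m →₀ ℕ) μ ((a i).coeff μ))]
    exact (AddMonoidAlgebra.sum_coeff_single (a i)).symm
  · intro y
    rw [AddMonoidAlgebra.single_mul_single, add_zero]
    constructor <;> intro h <;> ext μ
    · have := congrArg (fun x => x.coeff μ) h
      simp only [AddMonoidAlgebra.coeff_mul_single_zero, AddMonoidAlgebra.coeff_zero, Finsupp.coe_zero, Pi.zero_apply] at this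
      simpa [AddMonoidAlgebra.coeff_mul_single_zero] using (h2 (y.coeff μ)).mp this
    · have := congrArg (fun x => x.coeff μ) h
      simp only [AddMonoidAlgebra.coeff_mul_single_zero, AddMonoidAlgebra.coeff_zero, Finsupp.coe_zero, Pi.zero_apply] at this
      simpa [AddMonoidAlgebra.coeff_mul_single_zero] using (h2 (y.coeff μ)).mpr this
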